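/- arXiv:2010.12897 — 2 statements merged into one kernel-verified Lean document; each statement's English description precedes it below -/
import Mathlib

section
/- Let μ, ρ_t, E, ρ̄ > 0, ε₀ ∈ ℝ, and k ∈ ℤ with k ≠ 0. Both eigenvalues λ± = (2πk)²μ/(2ρ_t) ± (1/2)·√( ((2πk)²μ/ρ_t)² + 4·(2πk)²·E√ρ̄·(ε₀-1)/ρ_t ) (interpreted over ℂ when the discriminant is negative) have non-negative real part if and only if ε₀ ≤ 1. -/
open Real

lemma cpow_half_re (x : ℝ) : ((x : ℂ) ^ (1 / 2 : ℂ)).re = Real.sqrt x := by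
  rcases le_or_gt 0 x with hx | hx
  · have h := Complex.ofReal_cpow hx (1 / 2)
    have h2 : ((1 / 2 : ℝ) : ℂ) = (1 / 2 : ℂ) := by push_cast; ring
    rw [h2] at h
    rw [← h, Complex.ofReal_re, Real.sqrt_eq_rpow]
  · have hx0 : (x : ℂ) ≠ 0 := by
      simpa using ne_of_lt hx
    rw [Complex.cpow_def_of_ne_zero hx0, Complex.exp_re]
    have him : (Complex.log x * (1 / 2 : ℂ)).im = π / 2 := by
      simp [Complex.mul_im, Complex.log_im, Complex.arg_ofReal_of_neg hx]
      ring
    rw [him, Real.cos_pi_div_two, mul_zero]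
    exact (Real.sqrt_eq_zero'.mpr hx.le).symm

/-- For k ≠ 0, both eigenvalues λ± of the Fourier-mode-k linearization of the 1D
viscoelastic (α = 0) morphoelastic model have non-negative real part iff ε₀ ≤ 1. -/
theorem stmt_1 (μ ρt E ρbar ε₀ : ℝ) (k : ℤ) (hk : k ≠ 0)
    (hμ : 0 < μ) (hρt : 0 < ρt) (hE : 0 < E) (hρ : 0 < ρbar)
    (d : ℝ)
    (hd : d = ((2 * π * k) ^ 2 * μ / ρt) ^ 2
        + 4 * (2 * π * k) ^ 2 * (E * Real.sqrt ρbar) * (ε₀ - 1) / ρt)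
    (lp lm : ℂ)
    (hlp : lp = (((2 * π * k) ^ 2 * μ / (2 * ρt) : ℝ) : ℂ) + (d : ℂ) ^ (1 / 2 : ℂ) / 2)
    (hlm : lm = (((2 * π * k) ^ 2 * μ / (2 * ρt) : ℝ) : ℂ) - (d : ℂ) ^ (1 / 2 : ℂ) / 2) :
    (0 ≤ lp.re ∧ 0 ≤ lm.re) ↔ ε₀ ≤ 1 := by
  have hk2 : (0 : ℝ) < (2 * π * k) ^ 2 := by
    have : (2 * π * (k : ℝ)) ≠ 0 := by
      have : (k : ℝ) ≠ 0 := Int.cast_ne_zero.mpr hk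
      positivity
    positivity
  set a : ℝ := (2 * π * k) ^ 2 * μ / (2 * ρt) with ha
  have ha0 : 0 < a := by positivity
  have hre2 : ((d : ℂ) ^ (1 / 2 : ℂ) / 2).re = Real.sqrt d / 2 := by
    have h := Complex.div_ofReal_re ((d : ℂ) ^ (1 / 2 : ℂ)) 2
    rw [show ((2 : ℝ) : ℂ) = (2 : ℂ) by norm_num] at h
    rw [h, cpow_half_re]
  have hlpre : lp.re = a + Real.sqrt d / 2 := by
    rw [hlp, Complex.add_re, Complex.ofReal_re, hre2]
  have hlmre : lm.re = a - Real.sqrt d / 2 := by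
    rw [hlm, Complex.sub_re, Complex.ofReal_re, hre2]
  have hlp0 : 0 ≤ lp.re := by
    rw [hlpre]
    have := Real.sqrt_nonneg d
    linarith
  have h2a : (2 * π * k) ^ 2 * μ / ρt = 2 * a := by
    rw [ha]; field_simp
  have hc : 0 < 4 * (2 * π * k) ^ 2 * (E * Real.sqrt ρbar) / ρt := by
    have : 0 < Real.sqrt ρbar := Real.sqrt_pos.mpr hρ
    positivity
  have hsplit : 4 * (2 * π * k) ^ 2 * (E * Real.sqrt ρbar) * (ε₀ - 1) / ρt
      = (4 * (2 * π * k) ^ 2 * (E * Real.sqrt ρbar) / ρt) * (ε₀ - 1) := by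
    ring
  constructor
  · rintro ⟨-, hm⟩
    rw [hlmre] at hm
    have hs : Real.sqrt d ≤ 2 * a := by linarith
    have hd2 : d ≤ (2 * a) ^ 2 := by
      rcases le_or_gt d 0 with h0 | h0
      · nlinarith
      · nlinarith [Real.sq_sqrt (le_of_lt h0), Real.sqrt_nonneg d]
    rw [hd, h2a, hsplit] at hd2
    nlinarith
  · intro hε
    refine ⟨hlp0, ?_⟩
    rw [hlmre]
    have hd2 : d ≤ (2 * a) ^ 2 := by
      rw [hd, h2a, hsplit]
      nlinarith
    have hs : Real.sqrt d ≤ 2 * a :=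
      (Real.sqrt_le_sqrt hd2).trans (by rw [Real.sqrt_sq (by linarith)])
    linarith
end

section
/- Let α > 0 and μ, ρ_t, E, ρ̄ > 0, k ∈ ℤ. The roots of the quadratic λ² - (α + (2πk)²μ/ρ_t)·λ + (2πk)²(αμ + E√ρ̄)/ρ_t = 0 over ℂ both have non-negative real part. -/
open Real

lemma aux_quadratic_re (b c : ℝ) (hb : 0 ≤ b) (hc : 0 ≤ c) (lam : ℂ)
    (h : lam ^ 2 - (b : ℂ) * lam + (c : ℂ) = 0) : 0 ≤ lam.re := by
  by_contra hx
  push_neg at hx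
  set x := lam.re
  set y := lam.im
  have hre : x ^ 2 - y ^ 2 - b * x + c = 0 := by
    have := congrArg Complex.re h
    simp [Complex.add_re, Complex.sub_re, Complex.mul_re, pow_two] at this
    ring_nf at this ⊢
    linarith [this]
  have him : y * (2 * x - b) = 0 := by
    have := congrArg Complex.im h
    simp [Complex.add_im, Complex.sub_im, Complex.mul_im, pow_two] at this
    ring_nf at this ⊢
    linarith [this]
  have hy : y = 0 := by
    rcases mul_eq_zero.mp him with h1 | h2
    · exact h1
    · nlinarith
  rw [hy] at hre
  nlinarith

/-- For α > 0 and positive parameters, both complex roots of the characteristic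
quadratic of the Fourier-mode-k linearization of the 1D morphoelastic model with
plasticity have non-negative real part. -/
theorem stmt_4 (α μ ρt E ρbar : ℝ) (k : ℤ)
    (hα : 0 < α) (hμ : 0 < μ) (hρt : 0 < ρt) (hE : 0 < E) (hρ : 0 < ρbar) :
    ∀ lam : ℂ,
      lam ^ 2 - ((α + (2 * π * k) ^ 2 * μ / ρt : ℝ) : ℂ) * lam
          + (((2 * π * k) ^ 2 * (α * μ + E * Real.sqrt ρbar) / ρt : ℝ) : ℂ) = 0 →
        0 ≤ lam.re := by
  intro lam h
  apply aux_quadratic_re _ _ _ _ lam h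
  · positivity
  · have := Real.sqrt_nonneg ρbar
    positivity
end
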